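/- Under the same assumptions as the relaxation gap estimate, the randomization gap satisfies J* − 𝒥* ≤ C_1/(2N), where J* and 𝒥* are the values of the original and relaxed problems and C_1 = (1/N)∑_{j=1}^M L̃_j ∑_{i=1}^N d_{ij}². -/

import Mathlib

open Finset

local notation "⟪" x ", " y "⟫" => @inner ℝ _ _ x y

/-- A finitely supported probability measure, encoded as a `Finsupp` of weights. -/
def IsFinProb {Ω : Type*} (μ : Ω →₀ ℝ) : Prop :=
  (∀ x, 0 ≤ μ x) ∧ μ.sum (fun _ w => w) = 1

/-- Expectation of `F` under a finitely supported measure `μ`. -/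
noncomputable def expFS {Ω E : Type*} [AddCommMonoid E] [Module ℝ E]
    (μ : Ω →₀ ℝ) (F : Ω → E) : E :=
  μ.sum fun x w => w • F x

section helpers

variable {Ω : Type*} {H : Type*} [AddCommGroup H] [Module ℝ H]

lemma expFS_eq_sum (μ : Ω →₀ ℝ) (F : Ω → H) :
    expFS μ F = ∑ a ∈ μ.support, μ a • F a := rfl

lemma IsFinProb.weight_sum {μ : Ω →₀ ℝ} (hμ : IsFinProb μ) :
    ∑ a ∈ μ.support, μ a = 1 := hμ.2

lemma expFS_add (μ : Ω →₀ ℝ) (F G : Ω → H) :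
    expFS μ (fun a => F a + G a) = expFS μ F + expFS μ G := by
  simp [expFS_eq_sum, smul_add, Finset.sum_add_distrib]

lemma expFS_smul (μ : Ω →₀ ℝ) (c : ℝ) (F : Ω → H) :
    expFS μ (fun a => c • F a) = c • expFS μ F := by
  simp [expFS_eq_sum, Finset.smul_sum, smul_comm c]

lemma expFS_const {μ : Ω →₀ ℝ} (hμ : IsFinProb μ) (v : H) :
    expFS μ (fun _ => v) = v := by
  simp [expFS_eq_sum, ← Finset.sum_smul, hμ.weight_sum]

lemma expFS_finset_sum {ι : Type*} (μ : Ω →₀ ℝ) (t : Finset ι) (F : ι → Ω → H) :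
    expFS μ (fun a => ∑ j ∈ t, F j a) = ∑ j ∈ t, expFS μ (F j) := by
  simp [expFS_eq_sum, Finset.smul_sum]
  exact Finset.sum_comm

lemma expFS_affine {μ : Ω →₀ ℝ} (hμ : IsFinProb μ) (c : ℝ) (G : Ω → H) (v : H) :
    expFS μ (fun a => c • (G a + v)) = c • (expFS μ G + v) := by
  have : (fun a => c • (G a + v)) = fun a => (c • G a) + (fun _ : Ω => c • v) a := by
    funext a; rw [smul_add]
  rw [this, expFS_add, expFS_smul, expFS_const hμ, smul_add]

lemma expFS_const_sub {μ : Ω →₀ ℝ} (hμ : IsFinProb μ) (v : H) (G : Ω → H) :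
    expFS μ (fun a => v - G a) = v - expFS μ G := by
  have : (fun a => v - G a) = fun a => (fun _ : Ω => v) a + ((-1 : ℝ) • G a) := by
    funext a; simp [sub_eq_add_neg]
  rw [this, expFS_add, expFS_const hμ, expFS_smul]
  simp [sub_eq_add_neg]

lemma expFS_mem {μ : Ω →₀ ℝ} (hμ : IsFinProb μ) {C : Set H} (hC : Convex ℝ C)
    {F : Ω → H} (hF : ∀ a, F a ∈ C) : expFS μ F ∈ C := by
  rw [expFS_eq_sum]
  exact hC.sum_mem (fun a _ => hμ.1 a) hμ.weight_sum (fun a _ => hF a)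

lemma expFS_mono {μ : Ω →₀ ℝ} (hμ : IsFinProb μ) {h h' : Ω → ℝ}
    (hle : ∀ a, h a ≤ h' a) : expFS μ h ≤ expFS μ h' := by
  rw [expFS_eq_sum, expFS_eq_sum]
  exact Finset.sum_le_sum fun a _ => smul_le_smul_of_nonneg_left (hle a) (hμ.1 a)

lemma exists_le_expFS {μ : Ω →₀ ℝ} (hμ : IsFinProb μ) (h : Ω → ℝ) :
    ∃ a, h a ≤ expFS μ h := by
  have hne : μ.support.Nonempty := by
    by_contra hc
    rw [Finset.not_nonempty_iff_eq_empty] at hc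
    have := hμ.weight_sum
    rw [hc] at this; simp at this
  have hsum : ∑ a ∈ μ.support, μ a * h a ≤ ∑ a ∈ μ.support, μ a * expFS μ h := by
    rw [← Finset.sum_mul, hμ.weight_sum, one_mul]
    rw [expFS_eq_sum]; simp [smul_eq_mul]
  obtain ⟨a, ha, hle⟩ := Finset.exists_le_of_sum_le hne hsum
  refine ⟨a, ?_⟩
  have hpos : 0 < μ a := lt_of_le_of_ne (hμ.1 a) (Ne.symm (Finsupp.mem_support_iff.mp ha))
  exact le_of_mul_le_mul_left hle hpos

lemma isFinProb_single (a : Ω) : IsFinProb (Finsupp.single a (1 : ℝ)) := by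
  constructor
  · intro x
    classical
    rw [Finsupp.single_apply]
    split <;> norm_num
  · rw [Finsupp.sum_single_index]; rfl

lemma expFS_single (a : Ω) (F : Ω → H) : expFS (Finsupp.single a (1 : ℝ)) F = F a := by
  rw [expFS, Finsupp.sum_single_index (by simp), one_smul]

end helpers

section inner_helpers

variable {Ω : Type*} {H : Type*} [NormedAddCommGroup H] [InnerProductSpace ℝ H]

lemma expFS_inner (μ : Ω →₀ ℝ) (u : H) (G : Ω → H) :
    expFS μ (fun a => ⟪u, G a⟫) = ⟪u, expFS μ G⟫ := by
  simp [expFS_eq_sum, inner_sum, real_inner_smul_right, smul_eq_mul]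

lemma norm_expFS_le {μ : Ω →₀ ℝ} (hμ : IsFinProb μ) {F : Ω → H} {r : ℝ}
    (hF : ∀ a, ‖F a‖ ≤ r) : ‖expFS μ F‖ ≤ r := by
  rw [expFS_eq_sum]
  calc ‖∑ a ∈ μ.support, μ a • F a‖ ≤ ∑ a ∈ μ.support, ‖μ a • F a‖ :=
        norm_sum_le _ _
    _ ≤ ∑ a ∈ μ.support, μ a * r := by
        refine Finset.sum_le_sum fun a _ => ?_
        rw [norm_smul, Real.norm_eq_abs, abs_of_nonneg (hμ.1 a)]
        exact mul_le_mul_of_nonneg_left (hF a) (hμ.1 a)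
    _ = r := by rw [← Finset.sum_mul, hμ.weight_sum, one_mul]

end inner_helpers

section descent

variable {H : Type*} [NormedAddCommGroup H] [InnerProductSpace ℝ H] [CompleteSpace H]

lemma descent_lemma {D : Set H} (hD : Convex ℝ D) {f : H → ℝ} {F : H → H} {L : NNReal}
    (hdiff : ∀ z ∈ D, HasGradientAt f (F z) z)
    (hLip : LipschitzOnWith L F D) {x y : H} (hx : x ∈ D) (hy : y ∈ D) :
    f y ≤ f x + ⟪F x, y - x⟫ + ((L : ℝ) / 2) * ‖y - x‖ ^ 2 := by
  set v := y - x with hv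
  set ψ : ℝ → ℝ := fun t =>
    f (x + t • v) - t * ⟪F x, v⟫ - ((L : ℝ) / 2) * ‖v‖ ^ 2 * t ^ 2 with hψ
  have hmem : ∀ t ∈ Set.Icc (0 : ℝ) 1, x + t • v ∈ D := fun t ht =>
    hD.add_smul_sub_mem hx hy ht
  have hderiv : ∀ t ∈ Set.Icc (0 : ℝ) 1,
      HasDerivAt ψ (⟪F (x + t • v), v⟫ - ⟪F x, v⟫ - ((L : ℝ) / 2) * ‖v‖ ^ 2 * (2 * t)) t := by
    intro t ht
    have hγ : HasDerivAt (fun t : ℝ => x + t • v) v t := by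
      simpa using ((hasDerivAt_id t).smul_const v).const_add x
    have h1 : HasDerivAt (fun t : ℝ => f (x + t • v)) ⟪F (x + t • v), v⟫ t := by
      have hg := (hdiff _ (hmem t ht))
      have := (hasGradientAt_iff_hasFDerivAt.mp hg).comp_hasDerivAt t hγ
      simp only [InnerProductSpace.toDual_apply_apply] at this
      exact this
    have h2 : HasDerivAt (fun t : ℝ => t * ⟪F x, v⟫) ⟪F x, v⟫ t := by
      simpa using (hasDerivAt_id t).mul_const (⟪F x, v⟫)
    have h3 : HasDerivAt (fun t : ℝ => ((L : ℝ) / 2) * ‖v‖ ^ 2 * t ^ 2)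
        (((L : ℝ) / 2) * ‖v‖ ^ 2 * (2 * t)) t := by
      have h3' := (hasDerivAt_pow 2 t).const_mul (((L : ℝ) / 2) * ‖v‖ ^ 2)
      exact h3'.congr_deriv (by push_cast; ring)
    exact (h1.sub h2).sub h3
  have hnonpos : ∀ t ∈ Set.Icc (0 : ℝ) 1,
      ⟪F (x + t • v), v⟫ - ⟪F x, v⟫ - ((L : ℝ) / 2) * ‖v‖ ^ 2 * (2 * t) ≤ 0 := by
    intro t ht
    have hin : ⟪F (x + t • v) - F x, v⟫ ≤ (L : ℝ) * t * ‖v‖ ^ 2 := by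
      calc ⟪F (x + t • v) - F x, v⟫ ≤ ‖F (x + t • v) - F x‖ * ‖v‖ :=
            real_inner_le_norm _ _
        _ ≤ ((L : ℝ) * ‖(x + t • v) - x‖) * ‖v‖ := by
            refine mul_le_mul_of_nonneg_right ?_ (norm_nonneg _)
            have := hLip.norm_sub_le (hmem t ht) hx
            simpa using this
        _ = (L : ℝ) * t * ‖v‖ ^ 2 := by
            rw [add_sub_cancel_left, norm_smul, Real.norm_eq_abs, abs_of_nonneg ht.1]
            ring
    rw [inner_sub_left] at hin
    nlinarith [hin]
  have hanti : AntitoneOn ψ (Set.Icc (0 : ℝ) 1) := by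
    have hcont : ContinuousOn ψ (Set.Icc 0 1) :=
      fun t ht => ((hderiv t ht).continuousAt).continuousWithinAt
    refine antitoneOn_of_deriv_nonpos (convex_Icc 0 1) hcont ?_ ?_
    · intro t ht
      rw [interior_Icc] at ht
      exact ((hderiv t (Set.mem_Icc_of_Ioo ht)).differentiableAt).differentiableWithinAt
    · intro t ht
      rw [interior_Icc] at ht
      rw [(hderiv t (Set.mem_Icc_of_Ioo ht)).deriv]
      exact hnonpos t (Set.mem_Icc_of_Ioo ht)
  have := hanti (Set.left_mem_Icc.mpr zero_le_one) (Set.right_mem_Icc.mpr zero_le_one)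
    zero_le_one
  have hxy : x + (1 : ℝ) • v = y := by rw [hv]; simp
  have hx0 : x + (0 : ℝ) • v = x := by simp
  simp only [hψ, hxy, hx0] at this
  nlinarith [this]

end descent

/-- the randomization gap satisfies `J* - 𝒥* ≤ C₁/(2N)`,
with `C₁ = (1/N) ∑_j L̃_j ∑_i d_{ij}²`. -/
theorem randomization_gap_estimate
    {N M : ℕ} (hN : 0 < N)
    {X : Fin N → Type*} [∀ i, Nonempty (X i)]
    {E : Fin M → Type*}
    [∀ j, NormedAddCommGroup (E j)] [∀ j, InnerProductSpace ℝ (E j)]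
    [∀ j, CompleteSpace (E j)]
    (g : ∀ (i : Fin N) (j : Fin M), X i → E j)
    (f : ∀ j, E j → ℝ) (Df : ∀ j, E j → E j)
    (Lt : Fin M → NNReal) (d : Fin N → Fin M → ℝ)
    (hdiff : ∀ j, ∀ y ∈ convexHull ℝ
      (Set.range fun x : (∀ i, X i) => (N : ℝ)⁻¹ • ∑ i, g i j (x i)),
      HasGradientAt (f j) (Df j y) y)
    (hgradLip : ∀ j, LipschitzOnWith (Lt j) (Df j)
      (convexHull ℝ (Set.range fun x : (∀ i, X i) => (N : ℝ)⁻¹ • ∑ i, g i j (x i))))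
    (hd : ∀ i j (a b : X i), ‖g i j a - g i j b‖ ≤ d i j)
    (B : Set ℝ)
    (hB : B = {r | ∃ μ : ∀ i, X i →₀ ℝ, (∀ i, IsFinProb (μ i)) ∧
        r = ∑ j, f j ((N : ℝ)⁻¹ • ∑ i, expFS (μ i) (g i j))})
    (hBdd : BddBelow B) :
    sInf (Set.range fun x : (∀ i, X i) => ∑ j, f j ((N : ℝ)⁻¹ • ∑ i, g i j (x i))) -
        sInf B ≤
      ((N : ℝ)⁻¹ * ∑ j, (Lt j : ℝ) * ∑ i, d i j ^ 2) / (2 * N) := by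
  classical
  have hNR : ((N : ℝ)) ≠ 0 := Nat.cast_ne_zero.mpr hN.ne'
  -- the convex hulls
  set hull : ∀ j : Fin M, Set (E j) := fun j => convexHull ℝ
      (Set.range fun x : (∀ i, X i) => (N : ℝ)⁻¹ • ∑ i, g i j (x i)) with hhull
  -- generalized hull membership
  have hullmem : ∀ (j : Fin M) (ν : ∀ i, X i →₀ ℝ), (∀ i, IsFinProb (ν i)) →
      ∀ s : Finset (Fin N), ∀ x : ∀ i, X i,
      (N : ℝ)⁻¹ • (∑ k ∈ s, expFS (ν k) (g k j) + ∑ k ∈ sᶜ, g k j (x k)) ∈ hull j := by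
    intro j ν hν s
    induction s using Finset.induction_on with
    | empty =>
        intro x
        rw [Finset.sum_empty, zero_add, Finset.compl_empty]
        exact subset_convexHull ℝ _ ⟨x, rfl⟩
    | @insert i s hi ih =>
        intro x
        have hisc : i ∈ sᶜ := Finset.mem_compl.mpr hi
        have key : ∀ a : X i,
            (N : ℝ)⁻¹ • (g i j a + (∑ k ∈ s, expFS (ν k) (g k j) +
              ∑ k ∈ sᶜ.erase i, g k j (x k))) ∈ hull j := by
          intro a
          have h1 := ih (Function.update x i a)
          have h2 : ∑ k ∈ sᶜ, g k j (Function.update x i a k)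
              = g i j a + ∑ k ∈ sᶜ.erase i, g k j (x k) := by
            rw [← Finset.add_sum_erase _ _ hisc, Function.update_self]
            congr 1
            refine Finset.sum_congr rfl fun k hk => ?_
            rw [Function.update_of_ne (Finset.ne_of_mem_erase hk)]
          rw [h2] at h1
          have h3 : g i j a + (∑ k ∈ s, expFS (ν k) (g k j) +
              ∑ k ∈ sᶜ.erase i, g k j (x k))
              = ∑ k ∈ s, expFS (ν k) (g k j) +
                (g i j a + ∑ k ∈ sᶜ.erase i, g k j (x k)) := by abel
          rw [h3]
          exact h1
        rw [Finset.sum_insert hi, Finset.compl_insert, add_assoc]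
        have heq : (N : ℝ)⁻¹ • (expFS (ν i) (g i j) + (∑ k ∈ s, expFS (ν k) (g k j) +
            ∑ k ∈ sᶜ.erase i, g k j (x k)))
            = expFS (ν i) (fun a => (N : ℝ)⁻¹ • (g i j a + (∑ k ∈ s, expFS (ν k) (g k j) +
              ∑ k ∈ sᶜ.erase i, g k j (x k)))) := (expFS_affine (hν i) _ _ _).symm
        rw [heq]
        exact expFS_mem (hν i) (convex_convexHull ℝ _) key
  -- point representation for any finitely supported tuple
  have hpoint : ∀ (j : Fin M) (ν : ∀ i, X i →₀ ℝ), (∀ i, IsFinProb (ν i)) →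
      (N : ℝ)⁻¹ • (∑ k, expFS (ν k) (g k j)) ∈ hull j := by
    intro j ν hν
    have := hullmem j ν hν Finset.univ (Classical.arbitrary _)
    simpa using this
  -- splitting of the sum at index i
  have sum_split : ∀ (j : Fin M) (ν : ∀ i, X i →₀ ℝ) (i : Fin N),
      ∑ k, expFS (ν k) (g k j)
        = expFS (ν i) (g i j) + ∑ k ∈ Finset.univ.erase i, expFS (ν k) (g k j) := by
    intro j ν i
    rw [← Finset.add_sum_erase _ _ (Finset.mem_univ i)]
  -- key one-step derandomization
  have key : ∀ (μ : ∀ i, X i →₀ ℝ), (∀ i, IsFinProb (μ i)) → ∀ i : Fin N,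
      ∃ a : X i,
        (∑ j, f j ((N : ℝ)⁻¹ • ∑ k, expFS ((Function.update μ i (Finsupp.single a 1)) k) (g k j)))
          ≤ (∑ j, f j ((N : ℝ)⁻¹ • ∑ k, expFS (μ k) (g k j)))
            + (2 * (N : ℝ) ^ 2)⁻¹ * ∑ j, (Lt j : ℝ) * d i j ^ 2 := by
    intro μ hμ i
    set m : ∀ j, E j := fun j => expFS (μ i) (g i j) with hm
    set S : ∀ j, E j := fun j => ∑ k ∈ Finset.univ.erase i, expFS (μ k) (g k j) with hS
    set ybar : ∀ j, E j := fun j => (N : ℝ)⁻¹ • (m j + S j) with hybar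
    set y : ∀ j, X i → E j := fun j a => (N : ℝ)⁻¹ • (g i j a + S j) with hy
    have hupd : ∀ (a : X i) (k : Fin N),
        IsFinProb ((Function.update μ i (Finsupp.single a 1)) k) := by
      intro a k
      rcases eq_or_ne k i with rfl | hk
      · rw [Function.update_self]; exact isFinProb_single a
      · rw [Function.update_of_ne hk]; exact hμ k
    -- representation of updated point
    have hrep : ∀ (j : Fin M) (a : X i),
        (N : ℝ)⁻¹ • ∑ k, expFS ((Function.update μ i (Finsupp.single a 1)) k) (g k j)
          = y j a := by
      intro j a
      rw [sum_split j _ i, Function.update_self, expFS_single]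
      congr 2
      refine Finset.sum_congr rfl fun k hk => ?_
      rw [Function.update_of_ne (Finset.ne_of_mem_erase hk)]
    have hybar_eq : ∀ j : Fin M,
        (N : ℝ)⁻¹ • ∑ k, expFS (μ k) (g k j) = ybar j := by
      intro j; rw [sum_split j μ i]
    -- memberships
    have hybar_mem : ∀ j, ybar j ∈ hull j := by
      intro j; rw [← hybar_eq j]; exact hpoint j μ hμ
    have hy_mem : ∀ j a, y j a ∈ hull j := by
      intro j a
      rw [← hrep j a]
      exact hpoint j _ (hupd a)
    -- difference and norm bound
    have hdiffpt : ∀ (j : Fin M) (a : X i), y j a - ybar j = (N : ℝ)⁻¹ • (g i j a - m j) := by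
      intro j a
      rw [hy, hybar, ← smul_sub]
      congr 1; abel
    have hd0 : ∀ j, 0 ≤ d i j := fun j => by
      have := hd i j (Classical.arbitrary _) (Classical.arbitrary _)
      exact le_trans (norm_nonneg _) this
    have hnorm : ∀ (j : Fin M) (a : X i), ‖y j a - ybar j‖ ≤ (N : ℝ)⁻¹ * d i j := by
      intro j a
      rw [hdiffpt j a, norm_smul, Real.norm_eq_abs, abs_of_nonneg (by positivity)]
      refine mul_le_mul_of_nonneg_left ?_ (by positivity)
      have : g i j a - m j = expFS (μ i) (fun b => g i j a - g i j b) := by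
        rw [expFS_const_sub (hμ i)]
      rw [this]
      exact norm_expFS_le (hμ i) (fun b => hd i j a b)
    -- descent lemma per j
    have hdesc : ∀ (j : Fin M) (a : X i),
        f j (y j a) ≤ f j (ybar j) + ⟪Df j (ybar j), y j a - ybar j⟫
          + ((Lt j : ℝ) / 2) * ((N : ℝ)⁻¹ * d i j) ^ 2 := by
      intro j a
      have h1 := descent_lemma (convex_convexHull ℝ _) (hdiff j) (hgradLip j)
        (hybar_mem j) (hy_mem j a)
      refine h1.trans ?_
      have h2 : ‖y j a - ybar j‖ ^ 2 ≤ ((N : ℝ)⁻¹ * d i j) ^ 2 :=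
        pow_le_pow_left₀ (norm_nonneg _) (hnorm j a) 2
      have h3 : (0 : ℝ) ≤ (Lt j : ℝ) / 2 := by positivity
      nlinarith [mul_le_mul_of_nonneg_left h2 h3]
    -- the averaged function
    set h : X i → ℝ := fun a => ∑ j, f j (y j a) with hh
    set C0 : ℝ := ∑ j, (f j (ybar j) + ((Lt j : ℝ) / 2) * ((N : ℝ)⁻¹ * d i j) ^ 2) with hC0
    have hEH : expFS (μ i) (fun a => ∑ j, (f j (ybar j) + ⟪Df j (ybar j), y j a - ybar j⟫
        + ((Lt j : ℝ) / 2) * ((N : ℝ)⁻¹ * d i j) ^ 2)) = C0 := by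
      rw [expFS_finset_sum]
      refine Finset.sum_congr rfl fun j _ => ?_
      have hsplit : (fun a => f j (ybar j) + ⟪Df j (ybar j), y j a - ybar j⟫
          + ((Lt j : ℝ) / 2) * ((N : ℝ)⁻¹ * d i j) ^ 2)
          = fun a => (fun _ : X i => f j (ybar j) + ((Lt j : ℝ) / 2) * ((N : ℝ)⁻¹ * d i j) ^ 2) a
            + (fun a => ⟪Df j (ybar j), y j a - ybar j⟫) a := by
        funext a; ring
      rw [hsplit, expFS_add, expFS_const (hμ i), expFS_inner]
      have hzero : expFS (μ i) (fun a => y j a - ybar j) = 0 := by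
        have : (fun a => y j a - ybar j) = fun a => (N : ℝ)⁻¹ • (g i j a + (- m j)) := by
          funext a; rw [hdiffpt j a, sub_eq_add_neg]
        rw [this, expFS_affine (hμ i)]
        simp [hm]
      rw [hzero, inner_zero_right, add_zero]
    obtain ⟨a, ha⟩ := exists_le_expFS (hμ i) h
    refine ⟨a, ?_⟩
    have hL : (∑ j, f j ((N : ℝ)⁻¹ • ∑ k,
        expFS ((Function.update μ i (Finsupp.single a 1)) k) (g k j))) = h a := by
      refine Finset.sum_congr rfl fun j _ => ?_
      rw [hrep j a]
    have hEh : expFS (μ i) h ≤ C0 := by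
      rw [← hEH]
      exact expFS_mono (hμ i) fun a => Finset.sum_le_sum fun j _ => hdesc j a
    have hC0eq : C0 = (∑ j, f j ((N : ℝ)⁻¹ • ∑ k, expFS (μ k) (g k j)))
        + (2 * (N : ℝ) ^ 2)⁻¹ * ∑ j, (Lt j : ℝ) * d i j ^ 2 := by
      rw [hC0, Finset.sum_add_distrib, Finset.mul_sum]
      congr 1
      · exact Finset.sum_congr rfl fun j _ => by rw [hybar_eq j]
      · refine Finset.sum_congr rfl fun j _ => ?_
        field_simp
    rw [hL]
    calc h a ≤ expFS (μ i) h := ha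
      _ ≤ C0 := hEh
      _ = _ := hC0eq
  -- iterated derandomization
  have main : ∀ s : Finset (Fin N), ∀ μ : ∀ i, X i →₀ ℝ, (∀ i, IsFinProb (μ i)) →
      ∃ ν : ∀ i, X i →₀ ℝ, (∀ i, IsFinProb (ν i)) ∧
        (∀ i ∈ s, ∃ a : X i, ν i = Finsupp.single a 1) ∧
        (∀ i ∉ s, ν i = μ i) ∧
        (∑ j, f j ((N : ℝ)⁻¹ • ∑ k, expFS (ν k) (g k j)))
          ≤ (∑ j, f j ((N : ℝ)⁻¹ • ∑ k, expFS (μ k) (g k j)))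
            + (2 * (N : ℝ) ^ 2)⁻¹ * ∑ j, (Lt j : ℝ) * ∑ i ∈ s, d i j ^ 2 := by
    intro s
    induction s using Finset.induction_on with
    | empty =>
        intro μ hμ
        exact ⟨μ, hμ, by simp, fun i _ => rfl, by simp⟩
    | @insert i s hi ih =>
        intro μ hμ
        obtain ⟨a, ha⟩ := key μ hμ i
        set μ' := Function.update μ i (Finsupp.single a 1) with hμ'def
        have hμ' : ∀ k, IsFinProb (μ' k) := by
          intro k
          rcases eq_or_ne k i with rfl | hk
          · rw [hμ'def, Function.update_self]; exact isFinProb_single a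
          · rw [hμ'def, Function.update_of_ne hk]; exact hμ k
        obtain ⟨ν, hν, hνdirac, hνid, hνle⟩ := ih μ' hμ'
        refine ⟨ν, hν, ?_, ?_, ?_⟩
        · intro k hk
          rcases Finset.mem_insert.mp hk with rfl | hk'
          · rw [hνid k hi, hμ'def, Function.update_self]; exact ⟨a, rfl⟩
          · exact hνdirac k hk'
        · intro k hk
          have hk1 : k ∉ s := fun h => hk (Finset.mem_insert_of_mem h)
          have hk2 : k ≠ i := fun h => hk (h ▸ Finset.mem_insert_self i s)
          rw [hνid k hk1, hμ'def, Function.update_of_ne hk2]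
        · have hstep := ha
          have hcost : (2 * (N : ℝ) ^ 2)⁻¹ * ∑ j, (Lt j : ℝ) * ∑ k ∈ insert i s, d k j ^ 2
              = (2 * (N : ℝ) ^ 2)⁻¹ * ∑ j, (Lt j : ℝ) * d i j ^ 2
                + (2 * (N : ℝ) ^ 2)⁻¹ * ∑ j, (Lt j : ℝ) * ∑ k ∈ s, d k j ^ 2 := by
            rw [← mul_add, ← Finset.sum_add_distrib]
            congr 1
            refine Finset.sum_congr rfl fun j _ => ?_
            rw [Finset.sum_insert hi, mul_add]
          rw [hcost]
          calc (∑ j, f j ((N : ℝ)⁻¹ • ∑ k, expFS (ν k) (g k j)))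
              ≤ (∑ j, f j ((N : ℝ)⁻¹ • ∑ k, expFS (μ' k) (g k j)))
                + (2 * (N : ℝ) ^ 2)⁻¹ * ∑ j, (Lt j : ℝ) * ∑ k ∈ s, d k j ^ 2 := hνle
            _ ≤ _ := by linarith [hstep]
  -- assembly
  set J : (∀ i, X i) → ℝ := fun x => ∑ j, f j ((N : ℝ)⁻¹ • ∑ i, g i j (x i)) with hJ
  have hsub : Set.range J ⊆ B := by
    rintro r ⟨x, rfl⟩
    rw [hB]
    refine ⟨fun i => Finsupp.single (x i) 1, fun i => isFinProb_single _, ?_⟩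
    refine Finset.sum_congr rfl fun j _ => ?_
    congr 1
    refine congrArg _ (Finset.sum_congr rfl fun k _ => ?_)
    rw [expFS_single]
  have hBddJ : BddBelow (Set.range J) := hBdd.mono hsub
  have hBne : B.Nonempty := ⟨J (Classical.arbitrary _), hsub ⟨_, rfl⟩⟩
  set Cb : ℝ := (2 * (N : ℝ) ^ 2)⁻¹ * ∑ j, (Lt j : ℝ) * ∑ i, d i j ^ 2 with hCb
  have hlb : ∀ r ∈ B, sInf (Set.range J) - Cb ≤ r := by
    intro r hr
    rw [hB] at hr
    obtain ⟨μ, hμ, rfl⟩ := hr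
    obtain ⟨ν, hν, hνdirac, -, hνle⟩ := main Finset.univ μ hμ
    choose x hx using fun i => hνdirac i (Finset.mem_univ i)
    have hJx : J x = ∑ j, f j ((N : ℝ)⁻¹ • ∑ k, expFS (ν k) (g k j)) := by
      refine Finset.sum_congr rfl fun j _ => ?_
      congr 1
      refine congrArg _ (Finset.sum_congr rfl fun k _ => ?_)
      rw [hx k, expFS_single]
    have h1 : sInf (Set.range J) ≤ J x := csInf_le hBddJ ⟨x, rfl⟩
    rw [hJx] at h1
    have h2 := hνle
    simp only [hCb]
    linarith
  have hfin : sInf (Set.range J) - Cb ≤ sInf B := le_csInf hBne hlb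
  have hCbeq : Cb = ((N : ℝ)⁻¹ * ∑ j, (Lt j : ℝ) * ∑ i, d i j ^ 2) / (2 * N) := by
    rw [hCb]
    rw [eq_div_iff (by positivity : (2 * (N : ℝ)) ≠ 0)]
    field_simp
  rw [← hCbeq]
  linarith
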